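/- For every 𝒯 > 0, every δ > 0 and every unit vector λ = (λ₁,λ₂) ∈ ℝ², lim_{N→∞} P[ sup_{t∈[0,𝒯]} |λ₁ Z_N^{1>}(t) + λ₂ Z_N^{2>}(t)| > δ ] = 0. -/

import Mathlib

open MeasureTheory Real Filter Set
open scoped ENNReal NNReal

noncomputable section

instance : Fact ((0:ℝ) < 1) := ⟨one_pos⟩

/-- The one-dimensional torus `ℝ/ℤ`. -/
abbrev Torus := AddCircle (1 : ℝ)

/-- The two-dimensional torus `𝕋²`. -/
abbrev T2 := Torus × Torus

lemma sin_sq_periodic : Function.Periodic (fun x : ℝ => Real.sin (π * x) ^ 2) 1 := by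
  intro x
  simp only []
  have h : π * (x + 1) = π * x + π := by ring
  rw [h, Real.sin_add_pi]
  ring

lemma sincos_periodic :
    Function.Periodic (fun x : ℝ => Real.sin (π * x) * Real.cos (π * x)) 1 := by
  intro x
  simp only []
  have h : π * (x + 1) = π * x + π := by ring
  rw [h, Real.sin_add_pi, Real.cos_add_pi]
  ring

/-- `sin²(π k)` as a function on the circle. -/
def sin2 : Torus → ℝ := sin_sq_periodic.lift

/-- `sin(π k) cos(π k)` as a function on the circle. -/
def sincos : Torus → ℝ := sincos_periodic.lift

/-- The components of a point of the torus. -/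
def tcomp (k : T2) : Fin 2 → Torus := ![k.1, k.2]

/-- `Φ(k) = 8 ∑_α sin²(π k_α)`. -/
def Phi (k : T2) : ℝ := 8 * (sin2 k.1 + sin2 k.2)

/-- The scattering kernel `R(k,k') = 16 ∑_α sin²(π k_α) sin²(π k'_α)`. -/
def Rker (k k' : T2) : ℝ := 16 * (sin2 k.1 * sin2 k'.1 + sin2 k.2 * sin2 k'.2)

/-- The velocity `v_α(k) = sin(π k_α) cos(π k_α) / (∑_β sin²(π k_β))^{1/2}`. -/
def vel (α : Fin 2) (k : T2) : ℝ :=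
  sincos (tcomp k α) / Real.sqrt (sin2 k.1 + sin2 k.2)

/-- `ψ(k) = Φ(k)⁻¹ v(k)`. -/
def psiC (α : Fin 2) (k : T2) : ℝ := vel α k / Phi k

/-- The Markov transition kernel `P(k,dk') = Φ(k)⁻¹ R(k,k') dk'` on `𝕋²`. -/
def Pker (k : T2) : Measure T2 :=
  (volume : Measure T2).withDensity fun k' => ENNReal.ofReal ((Phi k)⁻¹ * Rker k k')

/-- The `m`-step kernel (`Pn 0 k` is the Dirac mass at `k`). -/
def Pn : ℕ → T2 → Measure T2
  | 0, k => Measure.dirac k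
  | (m + 1), k => (Pn m k).bind Pker

/-- The measure `π(dk) = (1/8) Φ(k) dk`. -/
def piM : Measure T2 :=
  (volume : Measure T2).withDensity fun k => ENNReal.ofReal ((1 / 8) * Phi k)

/-- The exponential distribution with mean one. -/
def expMeasure : Measure ℝ :=
  (volume : Measure ℝ).withDensity fun z =>
    if 0 ≤ z then ENNReal.ofReal (Real.exp (-z)) else 0


/-- `σ²`, defined as the limit
`lim_N (1/ln N) E_π[|e₁ψ¹(X₁)|² 𝟙{|e₁ψ¹(X₁)| ≤ √N}]`
(which the paper shows exists and equals `1/(128π)`). -/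
def sigma2 : ℝ := limUnder atTop fun N : ℕ =>
  (Real.log N)⁻¹ * ∫ k, (∫ z in Set.Ioi (0:ℝ),
    Real.exp (-z) * (z * psiC 0 k) ^ 2 *
      (if z * |psiC 0 k| ≤ Real.sqrt N then 1 else 0)) ∂piM

/-- A realization, on a probability space `Ω`, of the Markov chain `(X_n)_{n≥0}` on `𝕋²`
with transition kernel `P` and initial distribution `μ0` not concentrated at `k = 0`,
together with i.i.d. mean-one exponential random variables `(e_n)_{n≥0}` independent of
the chain. -/
structure ChainSetup (Ω : Type) [MeasurableSpace Ω] where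
  Pr : Measure Ω
  hprob : IsProbabilityMeasure Pr
  μ0 : Measure T2
  hμ0 : IsProbabilityMeasure μ0
  hμ0small : ∀ ε : ℝ, 0 < ε → ∃ δ : ℝ, 0 < δ ∧
    μ0 {k : T2 | ‖k‖ < δ} < ENNReal.ofReal ε
  X : ℕ → Ω → T2
  e : ℕ → Ω → ℝ
  hX : ∀ n, Measurable (X n)
  he : ∀ n, Measurable (e n)
  hinit : Measure.map (X 0) Pr = μ0
  hMarkov : ∀ (n : ℕ) (F : (Fin (n + 1) → T2) → ℝ≥0∞) (g : T2 → ℝ≥0∞),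
    Measurable F → Measurable g →
    ∫⁻ ω, F (fun i => X i ω) * g (X (n + 1) ω) ∂Pr
      = ∫⁻ ω, F (fun i => X i ω) * ∫⁻ k', g k' ∂(Pker (X n ω)) ∂Pr
  heLaw : ∀ n, Measure.map (e n) Pr = expMeasure
  heIndep : ProbabilityTheory.iIndepFun
    (m := fun _ : ℕ => (inferInstance : MeasurableSpace ℝ)) e Pr
  hXe : ProbabilityTheory.IndepFun
    (fun ω (i : ℕ) => X i ω) (fun ω (i : ℕ) => e i ω) Pr

variable {Ω : Type} [MeasurableSpace Ω]

/-- The position `S_n = ∑_{ℓ<n} e_ℓ ψ(X_ℓ)` (component `α`). -/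
def Svec (S : ChainSetup Ω) (α : Fin 2) (n : ℕ) (ω : Ω) : ℝ :=
  ∑ ℓ ∈ Finset.range n, S.e ℓ ω * psiC α (S.X ℓ ω)

/-- The clock `T_n = ∑_{ℓ<n} e_ℓ Φ(X_ℓ)⁻¹`. -/
def Tclock (S : ChainSetup Ω) (n : ℕ) (ω : Ω) : ℝ :=
  ∑ ℓ ∈ Finset.range n, S.e ℓ ω * (Phi (S.X ℓ ω))⁻¹

/-- The scaling constant `(N ln N)^{-1/2}`. -/
def cscale (N : ℕ) : ℝ := (Real.sqrt (N * Real.log N))⁻¹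

/-- The extremal part `Z_N^{α>}(t)`. -/
def ZgtVal (S : ChainSetup Ω) (N : ℕ) (α : Fin 2) (t : ℝ) (ω : Ω) : ℝ :=
  cscale N * ((∑ n ∈ Finset.range ⌊(N : ℝ) * t⌋₊,
      S.e n ω * psiC α (S.X n ω) *
        (if Real.sqrt N < S.e n ω * |psiC α (S.X n ω)| then 1 else 0))
    + ((N : ℝ) * t - ⌊(N : ℝ) * t⌋₊) * S.e ⌊(N : ℝ) * t⌋₊ ω *
        psiC α (S.X ⌊(N : ℝ) * t⌋₊ ω) *
        (if Real.sqrt N < S.e ⌊(N : ℝ) * t⌋₊ ω * |psiC α (S.X ⌊(N : ℝ) * t⌋₊ ω)|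
          then 1 else 0))

/-- The central part `Z_N^{α<}(t)`. -/
def ZltVal (S : ChainSetup Ω) (N : ℕ) (α : Fin 2) (t : ℝ) (ω : Ω) : ℝ :=
  cscale N * ((∑ n ∈ Finset.range ⌊(N : ℝ) * t⌋₊,
      S.e n ω * psiC α (S.X n ω) *
        (if S.e n ω * |psiC α (S.X n ω)| ≤ Real.sqrt N then 1 else 0))
    + ((N : ℝ) * t - ⌊(N : ℝ) * t⌋₊) * S.e ⌊(N : ℝ) * t⌋₊ ω *
        psiC α (S.X ⌊(N : ℝ) * t⌋₊ ω) *
        (if S.e ⌊(N : ℝ) * t⌋₊ ω * |psiC α (S.X ⌊(N : ℝ) * t⌋₊ ω)| ≤ Real.sqrt N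
          then 1 else 0))

/-! ### Auxiliary lemmas -/

open scoped Topology

lemma sin2_coe (x : ℝ) : sin2 (x : Torus) = Real.sin (π * x) ^ 2 := rfl

lemma sincos_coe (x : ℝ) : sincos (x : Torus) = Real.sin (π * x) * Real.cos (π * x) := rfl

lemma sin2_nonneg (x : Torus) : 0 ≤ sin2 x := by
  refine QuotientAddGroup.induction_on x fun r => ?_
  rw [sin2_coe]; positivity

lemma sincos_sq_le (x : Torus) : sincos x ^ 2 ≤ sin2 x := by
  refine QuotientAddGroup.induction_on x fun r => ?_
  rw [sin2_coe, sincos_coe]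
  have h1 : Real.cos (π * r) ^ 2 ≤ 1 := Real.cos_sq_le_one _
  nlinarith [sq_nonneg (Real.sin (π * r))]

lemma sincos_eq_zero {x : Torus} (h : sin2 x = 0) : sincos x = 0 := by
  have h1 := sincos_sq_le x
  have h2 : sincos x ^ 2 = 0 := le_antisymm (h ▸ h1) (sq_nonneg _)
  exact pow_eq_zero_iff two_ne_zero |>.mp h2

lemma continuous_sin2 : Continuous sin2 :=
  Continuous.quotient_liftOn' (by fun_prop) _

lemma continuous_sincos : Continuous sincos :=
  Continuous.quotient_liftOn' (by fun_prop) _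

lemma measurable_sin2 : Measurable sin2 := continuous_sin2.measurable

lemma measurable_sincos : Measurable sincos := continuous_sincos.measurable

/-- `u(k) = sin²(π k₁) + sin²(π k₂)`. -/
def usum (k : T2) : ℝ := sin2 k.1 + sin2 k.2

lemma usum_nonneg (k : T2) : 0 ≤ usum k :=
  add_nonneg (sin2_nonneg _) (sin2_nonneg _)

lemma measurable_usum : Measurable usum :=
  (measurable_sin2.comp measurable_fst).add (measurable_sin2.comp measurable_snd)

lemma measurable_psiC (α : Fin 2) : Measurable (psiC α) := by
  have hu : Measurable fun k : T2 => sin2 k.1 + sin2 k.2 :=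
    (measurable_sin2.comp measurable_fst).add (measurable_sin2.comp measurable_snd)
  have h1 : Measurable fun k : T2 => sincos (tcomp k α) := by
    fin_cases α
    · simpa [tcomp, Function.comp_def] using measurable_sincos.comp measurable_fst
    · simpa [tcomp, Function.comp_def] using measurable_sincos.comp measurable_snd
  unfold psiC vel Phi
  exact (h1.div (Real.continuous_sqrt.measurable.comp hu)).div (measurable_const.mul hu)

lemma sin_sq_lower {a : ℝ} (h : |a| ≤ 1 / 2) : 4 * a ^ 2 ≤ Real.sin (π * a) ^ 2 := by
  have hsq : Real.sin (π * a) ^ 2 = Real.sin (π * |a|) ^ 2 := by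
    rcases le_or_gt 0 a with ha | ha
    · rw [abs_of_nonneg ha]
    · rw [abs_of_neg ha, show π * -a = -(π * a) by ring, Real.sin_neg]; ring
  have h1 : 2 / π * (π * |a|) ≤ Real.sin (π * |a|) := by
    apply Real.mul_le_sin (by positivity)
    have := Real.pi_pos
    calc π * |a| ≤ π * (1 / 2) := by nlinarith
      _ = π / 2 := by ring
  have h2 : 2 / π * (π * |a|) = 2 * |a| := by
    field_simp
  rw [h2] at h1
  have h3 : (2 * |a|) ^ 2 ≤ Real.sin (π * |a|) ^ 2 := by
    apply pow_le_pow_left₀ (by positivity) h1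
  calc 4 * a ^ 2 = (2 * |a|) ^ 2 := by rw [mul_pow]; rw [sq_abs]; ring
    _ ≤ Real.sin (π * |a|) ^ 2 := h3
    _ = Real.sin (π * a) ^ 2 := hsq.symm

lemma torus_norm_coe (r : ℝ) : ‖(r : Torus)‖ = |r - round r| := by
  rw [AddCircle.norm_eq]; norm_num

lemma sin2_ge_norm (x : Torus) : 4 * ‖x‖ ^ 2 ≤ sin2 x := by
  refine QuotientAddGroup.induction_on x fun r => ?_
  set r' : ℝ := r - round r with hr'def
  have h0 : ((r' : ℝ) : Torus) = ((r : ℝ) : Torus) := by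
    have hz : ((r - r' : ℝ) : Torus) = 0 := by
      have : r - r' = (round r : ℝ) := by rw [hr'def]; ring
      rw [this, AddCircle.coe_eq_zero_iff]
      exact ⟨round r, by simp⟩
    have h2 : ((r : ℝ) : Torus) - ((r' : ℝ) : Torus) = 0 := by
      rw [← QuotientAddGroup.mk_sub]; exact hz
    have := sub_eq_zero.mp h2
    exact this.symm
  rw [← h0, sin2_coe, torus_norm_coe r']
  have habs : |r'| ≤ 1 / 2 := abs_sub_round r
  have hle : |r' - round r'| ≤ |r'| := by
    by_cases h : |r'| < 1 / 2
    · have hico : r' ∈ Set.Ico (-(1 / 2) : ℝ) (1 / 2) :=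
        ⟨(abs_lt.mp h).1.le, (abs_lt.mp h).2⟩
      rw [round_eq_zero_iff.mpr hico]
      simp
    · have h2 : |r'| = 1 / 2 := le_antisymm habs (not_lt.mp h)
      calc |r' - round r'| ≤ 1 / 2 := abs_sub_round r'
        _ = |r'| := h2.symm
  have h3 : |r' - round r'| ^ 2 ≤ |r'| ^ 2 := pow_le_pow_left₀ (abs_nonneg _) hle 2
  have h4 := sin_sq_lower habs
  calc 4 * |r' - round r'| ^ 2 ≤ 4 * |r'| ^ 2 := by linarith
    _ = 4 * r' ^ 2 := by rw [sq_abs]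
    _ ≤ Real.sin (π * r') ^ 2 := h4

lemma usum_ge_norm (k : T2) : 4 * ‖k‖ ^ 2 ≤ usum k := by
  have h1 := sin2_ge_norm k.1
  have h2 := sin2_ge_norm k.2
  have hn : ‖k‖ = max ‖k.1‖ ‖k.2‖ := Prod.norm_def k
  unfold usum
  rcases max_cases ‖k.1‖ ‖k.2‖ with ⟨hm, _⟩ | ⟨hm, _⟩ <;> rw [hn, hm]
  · linarith [sin2_nonneg k.2]
  · linarith [sin2_nonneg k.1]

lemma psiC_eq_zero (α : Fin 2) (k : T2) (h : usum k = 0) : psiC α k = 0 := by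
  have h1 : sin2 k.1 = 0 ∧ sin2 k.2 = 0 :=
    (add_eq_zero_iff_of_nonneg (sin2_nonneg _) (sin2_nonneg _)).mp h
  have h2 : sincos (tcomp k α) = 0 := by
    fin_cases α
    · simpa [tcomp] using sincos_eq_zero h1.1
    · simpa [tcomp] using sincos_eq_zero h1.2
  unfold psiC vel
  rw [h2]
  simp

lemma psiC_abs_le (α : Fin 2) (k : T2) : |psiC α k| ≤ (8 * usum k)⁻¹ := by
  rcases eq_or_lt_of_le (usum_nonneg k) with h | h
  · rw [psiC_eq_zero α k h.symm]
    simp [← h]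
  · have hu : 0 < sin2 k.1 + sin2 k.2 := h
    have hsu : 0 < Real.sqrt (sin2 k.1 + sin2 k.2) := Real.sqrt_pos.mpr hu
    have hsc : |sincos (tcomp k α)| ≤ Real.sqrt (sin2 k.1 + sin2 k.2) := by
      rw [← Real.sqrt_sq_eq_abs]
      apply Real.sqrt_le_sqrt
      calc sincos (tcomp k α) ^ 2 ≤ sin2 (tcomp k α) := sincos_sq_le _
        _ ≤ sin2 k.1 + sin2 k.2 := by
            fin_cases α
            · exact le_add_of_nonneg_right (sin2_nonneg k.2)
            · exact le_add_of_nonneg_left (sin2_nonneg k.1)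
    show |psiC α k| ≤ (8 * (sin2 k.1 + sin2 k.2))⁻¹
    unfold psiC vel Phi
    have hD : 0 < Real.sqrt (sin2 k.1 + sin2 k.2) * (8 * (sin2 k.1 + sin2 k.2)) := by positivity
    rw [div_div, abs_div, abs_of_pos hD, div_le_iff₀ hD]
    calc |sincos (tcomp k α)| ≤ Real.sqrt (sin2 k.1 + sin2 k.2) := hsc
      _ = (8 * (sin2 k.1 + sin2 k.2))⁻¹ *
          (Real.sqrt (sin2 k.1 + sin2 k.2) * (8 * (sin2 k.1 + sin2 k.2))) := by
          field_simp

lemma usum_pos_of_psiC {α : Fin 2} {k : T2} (h : psiC α k ≠ 0) : 0 < usum k := by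
  rcases eq_or_lt_of_le (usum_nonneg k) with h0 | h0
  · exact absurd (psiC_eq_zero α k h0.symm) h
  · exact h0

/-! ### The summands `Wf` -/

/-- The (nonnegative) extremal summand. -/
def Wf (S : ChainSetup Ω) (N : ℕ) (α : Fin 2) (n : ℕ) (ω : Ω) : ℝ :=
  S.e n ω * |psiC α (S.X n ω)| *
    (if Real.sqrt N < S.e n ω * |psiC α (S.X n ω)| then 1 else 0)

lemma Wf_nonneg (S : ChainSetup Ω) (N : ℕ) (α : Fin 2) (n : ℕ) (ω : Ω) :
    0 ≤ Wf S N α n ω := by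
  unfold Wf
  split
  · next h =>
      have h0 : (0:ℝ) ≤ Real.sqrt N := Real.sqrt_nonneg _
      nlinarith
  · simp

lemma abs_term_eq (S : ChainSetup Ω) (N : ℕ) (α : Fin 2) (n : ℕ) (ω : Ω) :
    |S.e n ω * psiC α (S.X n ω) *
      (if Real.sqrt N < S.e n ω * |psiC α (S.X n ω)| then 1 else 0)| = Wf S N α n ω := by
  unfold Wf
  split
  · next h =>
      rw [mul_one, mul_one, abs_mul]
      congr 1
      have h0 : 0 < S.e n ω * |psiC α (S.X n ω)| :=
        lt_of_le_of_lt (Real.sqrt_nonneg _) h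
      have he : 0 ≤ S.e n ω := by
        by_contra hc
        push_neg at hc
        nlinarith [abs_nonneg (psiC α (S.X n ω))]
      exact abs_of_nonneg he
  · simp

lemma measurable_Wf (S : ChainSetup Ω) (N : ℕ) (α : Fin 2) (n : ℕ) :
    Measurable (Wf S N α n) := by
  have h1 : Measurable fun ω => S.e n ω * |psiC α (S.X n ω)| :=
    (S.he n).mul ((measurable_psiC α).comp (S.hX n)).abs
  exact h1.mul (Measurable.ite (measurableSet_lt measurable_const h1)
    measurable_const measurable_const)

lemma Z_abs_le (S : ChainSetup Ω) (N : ℕ) (α : Fin 2) {t 𝒯 : ℝ} (ht : t ∈ Set.Icc 0 𝒯)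
    (ω : Ω) :
    |ZgtVal S N α t ω| ≤ cscale N * ∑ n ∈ Finset.range (⌊(N : ℝ) * 𝒯⌋₊ + 1), Wf S N α n ω := by
  have hcs : 0 ≤ cscale N := inv_nonneg.mpr (Real.sqrt_nonneg _)
  unfold ZgtVal
  rw [abs_mul, abs_of_nonneg hcs]
  apply mul_le_mul_of_nonneg_left ?_ hcs
  set m := ⌊(N : ℝ) * t⌋₊ with hm
  have hNt : (0:ℝ) ≤ (N : ℝ) * t := mul_nonneg (Nat.cast_nonneg _) ht.1
  have hfr0 : 0 ≤ (N : ℝ) * t - m := sub_nonneg.mpr (Nat.floor_le hNt)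
  have hfr1 : (N : ℝ) * t - m ≤ 1 := by
    have := Nat.lt_floor_add_one ((N : ℝ) * t)
    rw [← hm] at this
    linarith
  have hmM : m ≤ ⌊(N : ℝ) * 𝒯⌋₊ :=
    Nat.floor_le_floor (mul_le_mul_of_nonneg_left ht.2 (Nat.cast_nonneg _))
  calc |(∑ n ∈ Finset.range m, S.e n ω * psiC α (S.X n ω) *
          (if Real.sqrt N < S.e n ω * |psiC α (S.X n ω)| then 1 else 0))
        + ((N : ℝ) * t - m) * S.e m ω * psiC α (S.X m ω) *
          (if Real.sqrt N < S.e m ω * |psiC α (S.X m ω)| then 1 else 0)|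
      ≤ |∑ n ∈ Finset.range m, S.e n ω * psiC α (S.X n ω) *
          (if Real.sqrt N < S.e n ω * |psiC α (S.X n ω)| then 1 else 0)|
        + |((N : ℝ) * t - m) * S.e m ω * psiC α (S.X m ω) *
          (if Real.sqrt N < S.e m ω * |psiC α (S.X m ω)| then 1 else 0)| := abs_add_le _ _
    _ ≤ (∑ n ∈ Finset.range m, Wf S N α n ω) + Wf S N α m ω := by
        gcongr
        · calc |∑ n ∈ Finset.range m, S.e n ω * psiC α (S.X n ω) *
                (if Real.sqrt N < S.e n ω * |psiC α (S.X n ω)| then 1 else 0)|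
              ≤ ∑ n ∈ Finset.range m, |S.e n ω * psiC α (S.X n ω) *
                (if Real.sqrt N < S.e n ω * |psiC α (S.X n ω)| then 1 else 0)| :=
                Finset.abs_sum_le_sum_abs _ _
            _ = ∑ n ∈ Finset.range m, Wf S N α n ω :=
                Finset.sum_congr rfl fun n _ => abs_term_eq S N α n ω
        · have hre : ((N : ℝ) * t - m) * S.e m ω * psiC α (S.X m ω) *
              (if Real.sqrt N < S.e m ω * |psiC α (S.X m ω)| then 1 else 0)
              = ((N : ℝ) * t - m) * (S.e m ω * psiC α (S.X m ω) *
              (if Real.sqrt N < S.e m ω * |psiC α (S.X m ω)| then 1 else 0)) := by ring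
          rw [hre, abs_mul, abs_of_nonneg hfr0, abs_term_eq]
          exact mul_le_of_le_one_left (Wf_nonneg S N α m ω) hfr1
    _ = ∑ n ∈ Finset.range (m + 1), Wf S N α n ω := (Finset.sum_range_succ _ m).symm
    _ ≤ ∑ n ∈ Finset.range (⌊(N : ℝ) * 𝒯⌋₊ + 1), Wf S N α n ω :=
        Finset.sum_le_sum_of_subset_of_nonneg
          (Finset.range_subset_range.mpr (by omega)) (fun i _ _ => Wf_nonneg S N α i ω)

lemma lam_bound {lam : Fin 2 → ℝ} (hlam : ∑ α, lam α ^ 2 = 1) (α : Fin 2) : |lam α| ≤ 1 := by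
  rw [Fin.sum_univ_two] at hlam
  have h0 : lam 0 ^ 2 ≤ 1 := by nlinarith [sq_nonneg (lam 1)]
  have h1 : lam 1 ^ 2 ≤ 1 := by nlinarith [sq_nonneg (lam 0)]
  have h : lam α ^ 2 ≤ 1 := by fin_cases α; exacts [h0, h1]
  nlinarith [sq_abs (lam α), abs_nonneg (lam α)]

/-! ### The exponential measure -/

lemma expDens_measurable :
    Measurable fun z : ℝ => if 0 ≤ z then ENNReal.ofReal (Real.exp (-z)) else 0 := by
  apply Measurable.ite measurableSet_Ici
  · exact ENNReal.measurable_ofReal.comp (Real.measurable_exp.comp measurable_neg)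
  · exact measurable_const

lemma expMeasure_lintegral (f : ℝ → ℝ≥0∞) (hf : Measurable f) :
    ∫⁻ z, f z ∂expMeasure
      = ∫⁻ z, (if 0 ≤ z then ENNReal.ofReal (Real.exp (-z)) else 0) * f z := by
  unfold expMeasure
  rw [lintegral_withDensity_eq_lintegral_mul _ expDens_measurable hf]
  rfl

instance : SFinite expMeasure := by
  unfold expMeasure
  infer_instance

lemma expMeasure_Ioi_le {c : ℝ} (hc : 0 ≤ c) :
    expMeasure (Set.Ioi c) ≤ ENNReal.ofReal (Real.exp (-c)) := by
  unfold expMeasure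
  rw [withDensity_apply _ measurableSet_Ioi]
  have hcong : ∀ z ∈ Set.Ioi c,
      (if 0 ≤ z then ENNReal.ofReal (Real.exp (-z)) else 0) = ENNReal.ofReal (Real.exp (-z)) :=
    fun z hz => if_pos (le_trans hc (le_of_lt hz))
  rw [setLIntegral_congr_fun measurableSet_Ioi hcong]
  have hint : IntegrableOn (fun z : ℝ => Real.exp (-z)) (Set.Ioi c) := by
    simpa using exp_neg_integrableOn_Ioi c one_pos
  rw [← ofReal_integral_eq_lintegral_ofReal hint
    (Filter.Eventually.of_forall fun z => (Real.exp_pos _).le)]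
  rw [integral_exp_neg_Ioi]

lemma inner_bound {a s : ℝ} (ha : 0 < a) (hs : 0 ≤ s) :
    ∫⁻ z, ENNReal.ofReal (z * a * (if s < z * a then 1 else 0)) ∂expMeasure
      ≤ ENNReal.ofReal (4 * a * Real.exp (-(s / (2 * a)))) := by
  have hma : Measurable fun z : ℝ => z * a := measurable_id.mul_const a
  have hmf : Measurable fun z : ℝ => ENNReal.ofReal (z * a * (if s < z * a then 1 else 0)) :=
    ENNReal.measurable_ofReal.comp (hma.mul
      (Measurable.ite (measurableSet_lt measurable_const hma) measurable_const measurable_const))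
  rw [expMeasure_lintegral _ hmf]
  have hpt : ∀ z : ℝ,
      (if 0 ≤ z then ENNReal.ofReal (Real.exp (-z)) else 0) *
        ENNReal.ofReal (z * a * (if s < z * a then 1 else 0))
      ≤ (Set.Ioi (s / a)).indicator
          (fun z => ENNReal.ofReal (2 * a * Real.exp (-(2⁻¹ * z)))) z := by
    intro z
    by_cases hz : s < z * a
    · have hz' : s / a < z := (div_lt_iff₀ ha).mpr (by linarith)
      have hz0 : 0 ≤ z := by nlinarith
      rw [if_pos hz0, if_pos hz, Set.indicator_of_mem (Set.mem_Ioi.mpr hz'), mul_one,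
        ← ENNReal.ofReal_mul (Real.exp_nonneg _)]
      apply ENNReal.ofReal_le_ofReal
      have key : z * Real.exp (-z) ≤ 2 * Real.exp (-(2⁻¹ * z)) := by
        have h1 : z ≤ 2 * Real.exp (2⁻¹ * z) := by
          have := Real.add_one_le_exp (2⁻¹ * z)
          linarith
        calc z * Real.exp (-z) ≤ 2 * Real.exp (2⁻¹ * z) * Real.exp (-z) :=
              mul_le_mul_of_nonneg_right h1 (Real.exp_nonneg _)
          _ = 2 * Real.exp (-(2⁻¹ * z)) := by
              rw [mul_assoc, ← Real.exp_add]
              ring_nf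
      calc Real.exp (-z) * (z * a) = a * (z * Real.exp (-z)) := by ring
        _ ≤ a * (2 * Real.exp (-(2⁻¹ * z))) := mul_le_mul_of_nonneg_left key ha.le
        _ = 2 * a * Real.exp (-(2⁻¹ * z)) := by ring
    · rw [if_neg hz]
      simp
  calc ∫⁻ z, (if 0 ≤ z then ENNReal.ofReal (Real.exp (-z)) else 0) *
        ENNReal.ofReal (z * a * (if s < z * a then 1 else 0))
      ≤ ∫⁻ z, (Set.Ioi (s / a)).indicator
          (fun z => ENNReal.ofReal (2 * a * Real.exp (-(2⁻¹ * z)))) z := lintegral_mono hpt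
    _ = ∫⁻ z in Set.Ioi (s / a), ENNReal.ofReal (2 * a * Real.exp (-(2⁻¹ * z))) :=
        lintegral_indicator measurableSet_Ioi _
    _ = ENNReal.ofReal (∫ z in Set.Ioi (s / a), 2 * a * Real.exp (-(2⁻¹ * z))) := by
        rw [← ofReal_integral_eq_lintegral_ofReal]
        · have hint : IntegrableOn (fun z : ℝ => Real.exp (-(2⁻¹ * z))) (Set.Ioi (s / a)) := by
            simpa [neg_mul] using exp_neg_integrableOn_Ioi (s / a)
              (by norm_num : (0:ℝ) < 2⁻¹)
          exact hint.const_mul _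
        · exact Filter.Eventually.of_forall fun z => by positivity
    _ ≤ ENNReal.ofReal (4 * a * Real.exp (-(s / (2 * a)))) := by
        apply ENNReal.ofReal_le_ofReal
        rw [MeasureTheory.integral_const_mul]
        have hcomp : ∫ z in Set.Ioi (s / a), Real.exp (-(2⁻¹ * z))
            = (2⁻¹ : ℝ)⁻¹ • ∫ z in Set.Ioi (2⁻¹ * (s / a)), Real.exp (-z) :=
          integral_comp_mul_left_Ioi (fun z => Real.exp (-z)) (s / a)
            (by norm_num : (0:ℝ) < 2⁻¹)
        rw [hcomp, integral_exp_neg_Ioi]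
        rw [smul_eq_mul]
        have : 2⁻¹ * (s / a) = s / (2 * a) := by
          field_simp
        rw [this]
        ring_nf
        exact le_refl _

/-! ### Torus integral bounds -/

lemma circle_bound {c : ℝ} (hc : 0 < c) :
    ∫⁻ x : Torus, ENNReal.ofReal (Real.exp (-(c * sin2 x)))
      ≤ ENNReal.ofReal (Real.sqrt (π / (4 * c))) := by
  have h := AddCircle.lintegral_preimage (1 : ℝ) (-(1 / 2))
    (fun x => ENNReal.ofReal (Real.exp (-(c * sin2 x))))
  rw [← h]
  have he : -(1 / 2 : ℝ) + 1 = 1 / 2 := by norm_num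
  rw [he]
  have hmono : ∫⁻ a in Set.Ioc (-(1 / 2) : ℝ) (1 / 2),
      ENNReal.ofReal (Real.exp (-(c * sin2 (a : Torus))))
      ≤ ∫⁻ a in Set.Ioc (-(1 / 2) : ℝ) (1 / 2),
      ENNReal.ofReal (Real.exp (-(4 * c * a ^ 2))) := by
    apply setLIntegral_mono
    · exact ENNReal.measurable_ofReal.comp (by fun_prop)
    · intro a ha
      apply ENNReal.ofReal_le_ofReal
      apply Real.exp_le_exp.mpr
      have habs : |a| ≤ 1 / 2 := abs_le.mpr ⟨ha.1.le, ha.2⟩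
      have := sin_sq_lower habs
      rw [sin2_coe]
      nlinarith
  refine le_trans hmono (le_trans (setLIntegral_le_lintegral _ _) ?_)
  have hint : Integrable fun a : ℝ => Real.exp (-(4 * c) * a ^ 2) :=
    integrable_exp_neg_mul_sq (by positivity)
  have hshape : ∀ a : ℝ, (-(4 * c * a ^ 2)) = (-(4 * c) * a ^ 2) := fun a => by ring
  simp only [hshape]
  rw [← ofReal_integral_eq_lintegral_ofReal hint
    (Filter.Eventually.of_forall fun a => (Real.exp_pos _).le)]
  rw [integral_gaussian]

lemma torus_bound {c : ℝ} (hc : 0 < c) :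
    ∫⁻ k : T2, ENNReal.ofReal (Real.exp (-(c * usum k)))
      ≤ ENNReal.ofReal (π / (4 * c)) := by
  have hsplit : ∀ k : T2, ENNReal.ofReal (Real.exp (-(c * usum k)))
      = ENNReal.ofReal (Real.exp (-(c * sin2 k.1))) *
        ENNReal.ofReal (Real.exp (-(c * sin2 k.2))) := by
    intro k
    rw [← ENNReal.ofReal_mul (Real.exp_nonneg _), ← Real.exp_add]
    congr 2
    unfold usum
    ring
  simp only [hsplit]
  have hm1 : Measurable fun x : Torus => ENNReal.ofReal (Real.exp (-(c * sin2 x))) :=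
    ENNReal.measurable_ofReal.comp ((measurable_sin2.const_mul c).neg.exp)
  rw [MeasureTheory.Measure.volume_eq_prod, lintegral_prod_mul hm1.aemeasurable hm1.aemeasurable]
  calc (∫⁻ x : Torus, ENNReal.ofReal (Real.exp (-(c * sin2 x)))) *
        ∫⁻ x : Torus, ENNReal.ofReal (Real.exp (-(c * sin2 x)))
      ≤ ENNReal.ofReal (Real.sqrt (π / (4 * c))) * ENNReal.ofReal (Real.sqrt (π / (4 * c))) :=
        mul_le_mul' (circle_bound hc) (circle_bound hc)
    _ = ENNReal.ofReal (Real.sqrt (π / (4 * c)) * Real.sqrt (π / (4 * c))) :=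
        (ENNReal.ofReal_mul (Real.sqrt_nonneg _)).symm
    _ = ENNReal.ofReal (π / (4 * c)) := by
        rw [Real.mul_self_sqrt (by positivity)]

/-! ### The law of the chain -/

lemma kernel_density_le (k k' : T2) : (Phi k)⁻¹ * Rker k k' ≤ 2 * usum k' := by
  have s1n := sin2_nonneg k.1
  have s2n := sin2_nonneg k.2
  have t1n := sin2_nonneg k'.1
  have t2n := sin2_nonneg k'.2
  unfold Phi Rker usum
  rcases eq_or_lt_of_le (add_nonneg s1n s2n) with h | h
  · have hs1 : sin2 k.1 = 0 ∧ sin2 k.2 = 0 :=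
      (add_eq_zero_iff_of_nonneg s1n s2n).mp h.symm
    rw [hs1.1, hs1.2]
    simp
    positivity
  · rw [inv_mul_le_iff₀ (by positivity)]
    nlinarith [mul_nonneg s1n t2n, mul_nonneg s2n t1n]

lemma measurable_pker_density (k : T2) :
    Measurable fun k' : T2 => ENNReal.ofReal ((Phi k)⁻¹ * Rker k k') := by
  apply ENNReal.measurable_ofReal.comp
  apply Measurable.const_mul
  unfold Rker
  exact measurable_const.mul
    ((measurable_const.mul (measurable_sin2.comp measurable_fst)).add
      (measurable_const.mul (measurable_sin2.comp measurable_snd)))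

lemma lintegral_X_succ_le (S : ChainSetup Ω) (n : ℕ) (f : T2 → ℝ≥0∞) (hf : Measurable f) :
    ∫⁻ ω, f (S.X (n + 1) ω) ∂S.Pr ≤ ∫⁻ k, f k * ENNReal.ofReal (2 * usum k) := by
  haveI := S.hprob
  have h := S.hMarkov n (fun _ => 1) f measurable_const hf
  simp only [one_mul] at h
  rw [h]
  have hker : ∀ k : T2, ∫⁻ k', f k' ∂(Pker k) ≤ ∫⁻ k', f k' * ENNReal.ofReal (2 * usum k') := by
    intro k
    unfold Pker
    rw [lintegral_withDensity_eq_lintegral_mul _ (measurable_pker_density k) hf]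
    apply lintegral_mono
    intro k'
    calc ((fun k' => ENNReal.ofReal ((Phi k)⁻¹ * Rker k k')) * f) k'
        = ENNReal.ofReal ((Phi k)⁻¹ * Rker k k') * f k' := rfl
      _ ≤ ENNReal.ofReal (2 * usum k') * f k' :=
          mul_le_mul_left (ENNReal.ofReal_le_ofReal (kernel_density_le k k')) _
      _ = f k' * ENNReal.ofReal (2 * usum k') := mul_comm _ _
  calc ∫⁻ ω, ∫⁻ k', f k' ∂(Pker (S.X n ω)) ∂S.Pr
      ≤ ∫⁻ _ω, (∫⁻ k', f k' * ENNReal.ofReal (2 * usum k')) ∂S.Pr :=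
        lintegral_mono fun ω => hker _
    _ = ∫⁻ k', f k' * ENNReal.ofReal (2 * usum k') := by
        rw [lintegral_const, measure_univ, mul_one]

/-! ### Main estimates -/

lemma tendsto_sqrt_atTop : Tendsto Real.sqrt atTop atTop := by
  apply Filter.tendsto_atTop_atTop.mpr
  intro b
  refine ⟨(max b 0) ^ 2, fun a ha => ?_⟩
  have h0 : 0 ≤ max b 0 := le_max_right _ _
  calc b ≤ max b 0 := le_max_left _ _
    _ = Real.sqrt ((max b 0) ^ 2) := (Real.sqrt_sq h0).symm
    _ ≤ Real.sqrt a := Real.sqrt_le_sqrt ha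

lemma step_bound (S : ChainSetup Ω) (α : Fin 2) (n : ℕ) (N : ℕ) (hN : 1 ≤ N) :
    ∫⁻ ω, ENNReal.ofReal (Wf S N α (n + 1) ω) ∂S.Pr
      ≤ ENNReal.ofReal (π / (16 * Real.sqrt N)) := by
  haveI := S.hprob
  have hs0 : 0 < Real.sqrt N := Real.sqrt_pos.mpr (by
    have : (1:ℝ) ≤ (N:ℝ) := by exact_mod_cast hN
    linarith)
  set g : T2 × ℝ → ℝ≥0∞ := fun p =>
    ENNReal.ofReal (p.2 * |psiC α p.1| * (if Real.sqrt N < p.2 * |psiC α p.1| then 1 else 0))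
    with hgdef
  have h1 : Measurable fun p : T2 × ℝ => p.2 * |psiC α p.1| :=
    measurable_snd.mul (((measurable_psiC α).comp measurable_fst).abs)
  have hgm : Measurable g :=
    ENNReal.measurable_ofReal.comp (h1.mul
      (Measurable.ite (measurableSet_lt measurable_const h1) measurable_const measurable_const))
  have hXm := S.hX (n + 1)
  have hem := S.he (n + 1)
  have hpair : Measurable fun ω => (S.X (n + 1) ω, S.e (n + 1) ω) := hXm.prodMk hem
  have hident : (fun ω => ENNReal.ofReal (Wf S N α (n + 1) ω))
      = fun ω => g (S.X (n + 1) ω, S.e (n + 1) ω) := rfl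
  have hindep : ProbabilityTheory.IndepFun (S.X (n + 1)) (S.e (n + 1)) S.Pr := by
    have h := ProbabilityTheory.IndepFun.comp (φ := fun f : ℕ → T2 => f (n + 1))
      (ψ := fun f : ℕ → ℝ => f (n + 1)) S.hXe
      (measurable_pi_apply (n + 1) : Measurable fun f : ℕ → T2 => f (n + 1))
      (measurable_pi_apply (n + 1) : Measurable fun f : ℕ → ℝ => f (n + 1))
    exact h
  have hmap : S.Pr.map (fun ω => (S.X (n + 1) ω, S.e (n + 1) ω))
      = (S.Pr.map (S.X (n + 1))).prod expMeasure := by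
    rw [← S.heLaw (n + 1)]
    exact (ProbabilityTheory.indepFun_iff_map_prod_eq_prod_map_map
      hXm.aemeasurable hem.aemeasurable).mp hindep
  rw [hident, ← lintegral_map hgm hpair, hmap,
    MeasureTheory.lintegral_prod _ hgm.aemeasurable]
  set G : T2 → ℝ≥0∞ := fun k => ∫⁻ z, g (k, z) ∂expMeasure with hGdef
  have hGm : Measurable G := hgm.lintegral_prod_right'
  rw [lintegral_map hGm hXm]
  calc ∫⁻ ω, G (S.X (n + 1) ω) ∂S.Pr
      ≤ ∫⁻ k, G k * ENNReal.ofReal (2 * usum k) := lintegral_X_succ_le S n G hGm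
    _ ≤ ∫⁻ k, ENNReal.ofReal (Real.exp (-(4 * Real.sqrt N * usum k))) := by
        apply lintegral_mono
        intro k
        dsimp only
        by_cases hk : psiC α k = 0
        · have hG0 : G k = 0 := by
            have hz : ∀ z : ℝ, g (k, z) = 0 := by
              intro z
              show ENNReal.ofReal (z * |psiC α k| *
                if Real.sqrt N < z * |psiC α k| then 1 else 0) = 0
              rw [hk]
              simp [not_lt.mpr hs0.le]
            calc G k = ∫⁻ z, g (k, z) ∂expMeasure := rfl
              _ = 0 := by simp only [hz]; exact lintegral_zero
          rw [hG0, zero_mul]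
          exact zero_le
        · set a : ℝ := |psiC α k| with hadef
          have ha : 0 < a := abs_pos.mpr hk
          have hu : 0 < usum k := usum_pos_of_psiC hk
          have h8 : a ≤ (8 * usum k)⁻¹ := psiC_abs_le α k
          have h8u : 0 < 8 * usum k := by positivity
          have hGle : G k ≤ ENNReal.ofReal (4 * a * Real.exp (-(Real.sqrt N / (2 * a)))) :=
            inner_bound ha hs0.le
          have h81 : 8 * (a * usum k) ≤ 1 := by
            have h2 := mul_le_mul_of_nonneg_right h8 h8u.le
            rw [inv_mul_cancel₀ (ne_of_gt h8u)] at h2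
            nlinarith
          have hexp : Real.exp (-(Real.sqrt N / (2 * a)))
              ≤ Real.exp (-(4 * Real.sqrt N * usum k)) := by
            apply Real.exp_le_exp.mpr
            rw [neg_le_neg_iff, le_div_iff₀ (by positivity : (0:ℝ) < 2 * a)]
            nlinarith [hs0.le]
          calc G k * ENNReal.ofReal (2 * usum k)
              ≤ ENNReal.ofReal (4 * a * Real.exp (-(Real.sqrt N / (2 * a)))) *
                ENNReal.ofReal (2 * usum k) := mul_le_mul_left hGle _
            _ = ENNReal.ofReal (4 * a * Real.exp (-(Real.sqrt N / (2 * a))) * (2 * usum k)) :=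
                (ENNReal.ofReal_mul (by positivity)).symm
            _ ≤ ENNReal.ofReal (Real.exp (-(4 * Real.sqrt N * usum k))) := by
                apply ENNReal.ofReal_le_ofReal
                calc 4 * a * Real.exp (-(Real.sqrt N / (2 * a))) * (2 * usum k)
                    = (8 * (a * usum k)) * Real.exp (-(Real.sqrt N / (2 * a))) := by ring
                  _ ≤ 1 * Real.exp (-(4 * Real.sqrt N * usum k)) :=
                      mul_le_mul h81 hexp (Real.exp_nonneg _) one_pos.le
                  _ = Real.exp (-(4 * Real.sqrt N * usum k)) := one_mul _
    _ ≤ ENNReal.ofReal (π / (4 * (4 * Real.sqrt N))) := torus_bound (by positivity)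
    _ = ENNReal.ofReal (π / (16 * Real.sqrt N)) := by
        rw [show (4:ℝ) * (4 * Real.sqrt N) = 16 * Real.sqrt N by ring]

lemma head_bound (S : ChainSetup Ω) (α : Fin 2) (N : ℕ) {δ' : ℝ} (hδ' : 0 < δ') :
    S.Pr {ω | Real.sqrt N < S.e 0 ω * |psiC α (S.X 0 ω)|}
      ≤ S.μ0 {k : T2 | ‖k‖ < δ'}
        + ENNReal.ofReal (Real.exp (-(32 * δ' ^ 2 * Real.sqrt N))) := by
  haveI := S.hprob
  have hs : (0:ℝ) ≤ Real.sqrt N := Real.sqrt_nonneg _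
  have hsub : {ω | Real.sqrt N < S.e 0 ω * |psiC α (S.X 0 ω)|}
      ⊆ {ω | ‖S.X 0 ω‖ < δ'} ∪ {ω | 32 * δ' ^ 2 * Real.sqrt N < S.e 0 ω} := by
    intro ω hω
    rw [Set.mem_setOf_eq] at hω
    by_contra hcon
    rw [Set.mem_union, Set.mem_setOf_eq, Set.mem_setOf_eq] at hcon
    push_neg at hcon
    obtain ⟨h1, h2⟩ := hcon
    have hu : 4 * δ' ^ 2 ≤ usum (S.X 0 ω) := by
      have hb : 4 * δ' ^ 2 ≤ 4 * ‖S.X 0 ω‖ ^ 2 := by nlinarith [norm_nonneg (S.X 0 ω)]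
      exact le_trans hb (usum_ge_norm _)
    have ha : |psiC α (S.X 0 ω)| ≤ (32 * δ' ^ 2)⁻¹ := by
      refine le_trans (psiC_abs_le α _) ?_
      apply inv_anti₀ (by positivity)
      linarith
    have hle : S.e 0 ω * |psiC α (S.X 0 ω)| ≤ Real.sqrt N := by
      rcases le_or_gt (S.e 0 ω) 0 with he | he
      · exact le_trans (mul_nonpos_of_nonpos_of_nonneg he (abs_nonneg _)) hs
      · calc S.e 0 ω * |psiC α (S.X 0 ω)|
            ≤ (32 * δ' ^ 2 * Real.sqrt N) * (32 * δ' ^ 2)⁻¹ :=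
              mul_le_mul h2 ha (abs_nonneg _) (by positivity)
          _ = Real.sqrt N := by
              rw [mul_comm (32 * δ' ^ 2) (Real.sqrt (N:ℝ)), mul_assoc,
                mul_inv_cancel₀ (by positivity : (32:ℝ) * δ' ^ 2 ≠ 0), mul_one]
    exact absurd hω (not_lt.mpr hle)
  have hsetm : MeasurableSet {k : T2 | ‖k‖ < δ'} :=
    (isOpen_lt continuous_norm continuous_const).measurableSet
  calc S.Pr {ω | Real.sqrt N < S.e 0 ω * |psiC α (S.X 0 ω)|}
      ≤ S.Pr ({ω | ‖S.X 0 ω‖ < δ'} ∪ {ω | 32 * δ' ^ 2 * Real.sqrt N < S.e 0 ω}) :=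
        measure_mono hsub
    _ ≤ S.Pr {ω | ‖S.X 0 ω‖ < δ'} + S.Pr {ω | 32 * δ' ^ 2 * Real.sqrt N < S.e 0 ω} :=
        measure_union_le _ _
    _ ≤ S.μ0 {k : T2 | ‖k‖ < δ'}
        + ENNReal.ofReal (Real.exp (-(32 * δ' ^ 2 * Real.sqrt N))) := by
        gcongr
        · have : {ω | ‖S.X 0 ω‖ < δ'} = S.X 0 ⁻¹' {k : T2 | ‖k‖ < δ'} := rfl
          rw [this, ← Measure.map_apply (S.hX 0) hsetm, S.hinit]
        · have : {ω | 32 * δ' ^ 2 * Real.sqrt N < S.e 0 ω}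
              = S.e 0 ⁻¹' Set.Ioi (32 * δ' ^ 2 * Real.sqrt N) := rfl
          rw [this, ← Measure.map_apply (S.he 0) measurableSet_Ioi, S.heLaw 0]
          exact expMeasure_Ioi_le (by positivity)

/-- **Lemma `lemmaS+`.** The extremal part vanishes:
for every `𝒯 > 0`, `δ > 0` and unit vector `λ ∈ ℝ²`,
`P[ sup_{t∈[0,𝒯]} |λ₁ Z_N^{1>}(t) + λ₂ Z_N^{2>}(t)| > δ ] → 0` as `N → ∞`. -/
theorem extremal_part_vanishes (S : ChainSetup Ω) (𝒯 : ℝ) (h𝒯 : 0 < 𝒯)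
    (δ : ℝ) (hδ : 0 < δ) (lam : Fin 2 → ℝ) (hlam : ∑ α, lam α ^ 2 = 1) :
    Tendsto (fun N : ℕ =>
        S.Pr {ω | ∃ t ∈ Set.Icc (0:ℝ) 𝒯, δ < |∑ α, lam α * ZgtVal S N α t ω|})
      atTop (nhds 0) := by
  haveI := S.hprob
  rw [ENNReal.tendsto_nhds_zero]
  intro ε hε
  -- choose a real `ε'` with `ofReal (2 ε') ≤ ε / 2`
  obtain ⟨ε', hε'0, hε'⟩ : ∃ ε' : ℝ, 0 < ε' ∧ ENNReal.ofReal (2 * ε') ≤ ε / 2 := by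
    rcases eq_or_ne ε ⊤ with rfl | htop
    · exact ⟨1, one_pos, by
        rw [ENNReal.top_div_of_ne_top (by norm_num)]
        exact le_top⟩
    · refine ⟨ε.toReal / 8, by have := ENNReal.toReal_pos hε.ne' htop; positivity, ?_⟩
      have ht0 : 0 < ε.toReal := ENNReal.toReal_pos hε.ne' htop
      calc ENNReal.ofReal (2 * (ε.toReal / 8)) = ENNReal.ofReal (ε.toReal / 4) := by
            rw [show 2 * (ε.toReal / 8) = ε.toReal / 4 from by ring]
        _ ≤ ENNReal.ofReal (ε.toReal / 2) :=
            ENNReal.ofReal_le_ofReal (by linarith)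
        _ = ENNReal.ofReal ε.toReal / ENNReal.ofReal 2 :=
            ENNReal.ofReal_div_of_pos two_pos
        _ = ε / 2 := by rw [ENNReal.ofReal_toReal htop, ENNReal.ofReal_ofNat]
  obtain ⟨δ', hδ'0, hμδ'⟩ := S.hμ0small ε' hε'0
  set M : ℕ → ℕ := fun N => ⌊(N : ℝ) * 𝒯⌋₊ with hM
  -- the three-part bound
  have hbound : ∀ N : ℕ, 1 ≤ N →
      S.Pr {ω | ∃ t ∈ Set.Icc (0:ℝ) 𝒯, δ < |∑ α, lam α * ZgtVal S N α t ω|}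
        ≤ ENNReal.ofReal (2 * ε')
          + (2 * ENNReal.ofReal (Real.exp (-(32 * δ' ^ 2 * Real.sqrt N)))
            + ENNReal.ofReal (δ⁻¹ * (cscale N *
              ((M N : ℝ) * (2 * (π / (16 * Real.sqrt N))))))) := by
    intro N hN
    have hs0 : 0 < Real.sqrt N := Real.sqrt_pos.mpr (by
      have : (1:ℝ) ≤ (N:ℝ) := by exact_mod_cast hN
      linarith)
    set A : Fin 2 → Set Ω := fun α => {ω | Real.sqrt N < S.e 0 ω * |psiC α (S.X 0 ω)|}
      with hA
    set TS : Ω → ℝ := fun ω =>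
      ∑ j ∈ Finset.range (M N), (Wf S N 0 (j + 1) ω + Wf S N 1 (j + 1) ω) with hTS
    have hTSnn : ∀ ω, 0 ≤ TS ω := fun ω =>
      Finset.sum_nonneg fun j _ => add_nonneg (Wf_nonneg _ _ _ _ _) (Wf_nonneg _ _ _ _ _)
    set C : Set Ω :=
      {ω | ENNReal.ofReal δ ≤ ENNReal.ofReal (cscale N * TS ω)} with hC
    have hincl : {ω | ∃ t ∈ Set.Icc (0:ℝ) 𝒯, δ < |∑ α, lam α * ZgtVal S N α t ω|}
        ⊆ (A 0 ∪ A 1) ∪ C := by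
      intro ω hω
      obtain ⟨t, ht, hgt⟩ := hω
      by_cases h0 : ω ∈ A 0 ∪ A 1
      · exact Or.inl h0
      · right
        simp only [hA, Set.mem_union, Set.mem_setOf_eq, not_or, not_lt] at h0
        obtain ⟨h00, h01⟩ := h0
        have hW0 : ∀ α : Fin 2, Wf S N α 0 ω = 0 := by
          intro α
          have hle : S.e 0 ω * |psiC α (S.X 0 ω)| ≤ Real.sqrt N := by
            fin_cases α
            · exact h00
            · exact h01
          unfold Wf
          rw [if_neg (not_lt.mpr hle), mul_zero]
        have hZ : |∑ α, lam α * ZgtVal S N α t ω| ≤ cscale N * TS ω := by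
          calc |∑ α, lam α * ZgtVal S N α t ω|
              ≤ ∑ α, |lam α * ZgtVal S N α t ω| := Finset.abs_sum_le_sum_abs _ _
            _ ≤ ∑ α : Fin 2, |ZgtVal S N α t ω| := Finset.sum_le_sum fun α _ => by
                rw [abs_mul]
                exact mul_le_of_le_one_left (abs_nonneg _) (lam_bound hlam α)
            _ ≤ ∑ α : Fin 2, cscale N * ∑ n ∈ Finset.range (M N + 1), Wf S N α n ω :=
                Finset.sum_le_sum fun α _ => Z_abs_le S N α ht ω
            _ = cscale N * TS ω := by
                rw [Fin.sum_univ_two, hTS]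
                simp only [Finset.sum_add_distrib]
                rw [Finset.sum_range_succ' (fun n => Wf S N 0 n ω) (M N),
                  Finset.sum_range_succ' (fun n => Wf S N 1 n ω) (M N), hW0 0, hW0 1]
                ring
        exact Set.mem_setOf_eq ▸ ENNReal.ofReal_le_ofReal (le_of_lt (lt_of_lt_of_le hgt hZ))
    have hmTS : Measurable fun ω => ENNReal.ofReal (cscale N * TS ω) := by
      apply ENNReal.measurable_ofReal.comp
      exact measurable_const.mul (Finset.measurable_sum _ fun j _ =>
        (measurable_Wf S N 0 (j + 1)).add (measurable_Wf S N 1 (j + 1)))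
    have hmarkov : S.Pr C ≤ ENNReal.ofReal (δ⁻¹ * (cscale N *
        ((M N : ℝ) * (2 * (π / (16 * Real.sqrt N)))))) := by
      have h1 : S.Pr C ≤ (∫⁻ ω, ENNReal.ofReal (cscale N * TS ω) ∂S.Pr) / ENNReal.ofReal δ :=
        meas_ge_le_lintegral_div hmTS.aemeasurable
          (ne_of_gt (ENNReal.ofReal_pos.mpr hδ)) ENNReal.ofReal_ne_top
      have hcs : 0 ≤ cscale N := inv_nonneg.mpr (Real.sqrt_nonneg _)
      have h2 : ∫⁻ ω, ENNReal.ofReal (cscale N * TS ω) ∂S.Pr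
          ≤ ENNReal.ofReal (cscale N) *
            ((M N : ℝ≥0∞) * (2 * ENNReal.ofReal (π / (16 * Real.sqrt N)))) := by
        have hpt : ∀ ω, ENNReal.ofReal (cscale N * TS ω)
            = ENNReal.ofReal (cscale N) * ∑ j ∈ Finset.range (M N),
              (ENNReal.ofReal (Wf S N 0 (j + 1) ω) + ENNReal.ofReal (Wf S N 1 (j + 1) ω)) := by
          intro ω
          rw [ENNReal.ofReal_mul hcs, hTS,
            ENNReal.ofReal_sum_of_nonneg fun j _ =>
              add_nonneg (Wf_nonneg _ _ _ _ _) (Wf_nonneg _ _ _ _ _)]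
          congr 1
          exact Finset.sum_congr rfl fun j _ =>
            ENNReal.ofReal_add (Wf_nonneg _ _ _ _ _) (Wf_nonneg _ _ _ _ _)
        simp only [hpt]
        rw [lintegral_const_mul _ (f := fun ω => ∑ j ∈ Finset.range (M N),
            (ENNReal.ofReal (Wf S N 0 (j + 1) ω) + ENNReal.ofReal (Wf S N 1 (j + 1) ω))) (Finset.measurable_sum _ fun j _ =>
          ((measurable_Wf S N 0 (j + 1)).ennreal_ofReal.add
            (measurable_Wf S N 1 (j + 1)).ennreal_ofReal))]
        apply mul_le_mul_right
        rw [lintegral_finset_sum _ (f := fun j ω =>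
            ENNReal.ofReal (Wf S N 0 (j + 1) ω) + ENNReal.ofReal (Wf S N 1 (j + 1) ω)) fun j _ =>
          ((measurable_Wf S N 0 (j + 1)).ennreal_ofReal.add
            (measurable_Wf S N 1 (j + 1)).ennreal_ofReal)]
        calc ∑ j ∈ Finset.range (M N), ∫⁻ ω, (ENNReal.ofReal (Wf S N 0 (j + 1) ω)
              + ENNReal.ofReal (Wf S N 1 (j + 1) ω)) ∂S.Pr
            ≤ ∑ _j ∈ Finset.range (M N), 2 * ENNReal.ofReal (π / (16 * Real.sqrt N)) := by
              apply Finset.sum_le_sum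
              intro j _
              rw [lintegral_add_left (measurable_Wf S N 0 (j + 1)).ennreal_ofReal]
              rw [two_mul]
              exact add_le_add (step_bound S 0 j N hN) (step_bound S 1 j N hN)
          _ = (M N : ℝ≥0∞) * (2 * ENNReal.ofReal (π / (16 * Real.sqrt N))) := by
              rw [Finset.sum_const, Finset.card_range, nsmul_eq_mul]
      have h3 : ENNReal.ofReal (cscale N) *
          ((M N : ℝ≥0∞) * (2 * ENNReal.ofReal (π / (16 * Real.sqrt N)))) / ENNReal.ofReal δ
          = ENNReal.ofReal (δ⁻¹ * (cscale N *
            ((M N : ℝ) * (2 * (π / (16 * Real.sqrt N)))))) := by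
        have hpi : (0:ℝ) ≤ π / (16 * Real.sqrt N) := by positivity
        rw [show δ⁻¹ * (cscale N * ((M N : ℝ) * (2 * (π / (16 * Real.sqrt N)))))
          = (cscale N * ((M N : ℝ) * (2 * (π / (16 * Real.sqrt N))))) / δ from by ring]
        rw [ENNReal.ofReal_div_of_pos hδ]
        congr 1
        rw [ENNReal.ofReal_mul hcs, ENNReal.ofReal_mul (Nat.cast_nonneg _),
          ENNReal.ofReal_mul (by norm_num : (0:ℝ) ≤ 2), ENNReal.ofReal_natCast,
          ENNReal.ofReal_ofNat]
      calc S.Pr C ≤ (∫⁻ ω, ENNReal.ofReal (cscale N * TS ω) ∂S.Pr) / ENNReal.ofReal δ := h1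
        _ ≤ ENNReal.ofReal (cscale N) *
            ((M N : ℝ≥0∞) * (2 * ENNReal.ofReal (π / (16 * Real.sqrt N)))) / ENNReal.ofReal δ :=
            ENNReal.div_le_div_right h2 _
        _ = _ := h3
    calc S.Pr {ω | ∃ t ∈ Set.Icc (0:ℝ) 𝒯, δ < |∑ α, lam α * ZgtVal S N α t ω|}
        ≤ S.Pr ((A 0 ∪ A 1) ∪ C) := measure_mono hincl
      _ ≤ S.Pr (A 0 ∪ A 1) + S.Pr C := measure_union_le _ _
      _ ≤ (S.Pr (A 0) + S.Pr (A 1)) + S.Pr C := add_le_add_left (measure_union_le _ _) _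
      _ ≤ ((S.μ0 {k : T2 | ‖k‖ < δ'} + ENNReal.ofReal (Real.exp (-(32 * δ' ^ 2 * Real.sqrt N))))
            + (S.μ0 {k : T2 | ‖k‖ < δ'}
              + ENNReal.ofReal (Real.exp (-(32 * δ' ^ 2 * Real.sqrt N)))))
          + ENNReal.ofReal (δ⁻¹ * (cscale N *
              ((M N : ℝ) * (2 * (π / (16 * Real.sqrt N)))))) :=
          add_le_add (add_le_add (head_bound S 0 N hδ'0) (head_bound S 1 N hδ'0)) hmarkov
      _ ≤ ENNReal.ofReal (2 * ε')
          + (2 * ENNReal.ofReal (Real.exp (-(32 * δ' ^ 2 * Real.sqrt N)))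
            + ENNReal.ofReal (δ⁻¹ * (cscale N *
              ((M N : ℝ) * (2 * (π / (16 * Real.sqrt N))))))) := by
          have hμ : S.μ0 {k : T2 | ‖k‖ < δ'} ≤ ENNReal.ofReal ε' := hμδ'.le
          have h2ε : ENNReal.ofReal (2 * ε') = ENNReal.ofReal ε' + ENNReal.ofReal ε' := by
            rw [two_mul, ENNReal.ofReal_add hε'0.le hε'0.le]
          have h2e : (2 : ℝ≥0∞) * ENNReal.ofReal (Real.exp (-(32 * δ' ^ 2 * Real.sqrt N)))
              = ENNReal.ofReal (Real.exp (-(32 * δ' ^ 2 * Real.sqrt N)))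
                + ENNReal.ofReal (Real.exp (-(32 * δ' ^ 2 * Real.sqrt N))) := two_mul _
          rw [h2ε, h2e]
          calc (S.μ0 {k : T2 | ‖k‖ < δ'} + ENNReal.ofReal (Real.exp (-(32 * δ' ^ 2 * Real.sqrt N)))
                + (S.μ0 {k : T2 | ‖k‖ < δ'}
                  + ENNReal.ofReal (Real.exp (-(32 * δ' ^ 2 * Real.sqrt N)))))
              + ENNReal.ofReal (δ⁻¹ * (cscale N *
                  ((M N : ℝ) * (2 * (π / (16 * Real.sqrt N))))))
              ≤ (ENNReal.ofReal ε' + ENNReal.ofReal (Real.exp (-(32 * δ' ^ 2 * Real.sqrt N)))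
                + (ENNReal.ofReal ε'
                  + ENNReal.ofReal (Real.exp (-(32 * δ' ^ 2 * Real.sqrt N)))))
              + ENNReal.ofReal (δ⁻¹ * (cscale N *
                  ((M N : ℝ) * (2 * (π / (16 * Real.sqrt N)))))) := by
                gcongr
            _ = ENNReal.ofReal ε' + ENNReal.ofReal ε'
              + ((ENNReal.ofReal (Real.exp (-(32 * δ' ^ 2 * Real.sqrt N)))
                + ENNReal.ofReal (Real.exp (-(32 * δ' ^ 2 * Real.sqrt N))))
              + ENNReal.ofReal (δ⁻¹ * (cscale N *
                  ((M N : ℝ) * (2 * (π / (16 * Real.sqrt N))))))) := by ring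
  -- the variable part tends to zero
  have hlimA : Tendsto (fun N : ℕ =>
      2 * ENNReal.ofReal (Real.exp (-(32 * δ' ^ 2 * Real.sqrt N)))) atTop (nhds 0) := by
    have hr : Tendsto (fun N : ℕ => Real.exp (-(32 * δ' ^ 2 * Real.sqrt N))) atTop (nhds 0) := by
      have h1 : Tendsto (fun N : ℕ => 32 * δ' ^ 2 * Real.sqrt N) atTop atTop :=
        (_root_.tendsto_sqrt_atTop.comp tendsto_natCast_atTop_atTop).const_mul_atTop (by positivity)
      exact Real.tendsto_exp_neg_atTop_nhds_zero.comp h1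
    have := ENNReal.Tendsto.const_mul (ENNReal.tendsto_ofReal hr)
      (Or.inr (by norm_num : (2:ℝ≥0∞) ≠ ⊤))
    simpa using this
  have hlimB : Tendsto (fun N : ℕ =>
      ENNReal.ofReal (δ⁻¹ * (cscale N * ((M N : ℝ) * (2 * (π / (16 * Real.sqrt N)))))))
      atTop (nhds 0) := by
    have hr : Tendsto (fun N : ℕ =>
        δ⁻¹ * (cscale N * ((M N : ℝ) * (2 * (π / (16 * Real.sqrt N)))))) atTop (nhds 0) := by
      have hg : Tendsto (fun N : ℕ =>
          (δ⁻¹ * π * 𝒯 / 8) * (Real.sqrt (Real.log N))⁻¹) atTop (nhds 0) := by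
        have h1 : Tendsto (fun N : ℕ => (Real.sqrt (Real.log N))⁻¹) atTop (nhds 0) :=
          tendsto_inv_atTop_zero.comp
            (_root_.tendsto_sqrt_atTop.comp (Real.tendsto_log_atTop.comp tendsto_natCast_atTop_atTop))
        simpa using h1.const_mul (δ⁻¹ * π * 𝒯 / 8)
      apply squeeze_zero' ?_ ?_ hg
      · filter_upwards with N
        have hpi := Real.pi_pos
        have hcs : 0 ≤ cscale N := inv_nonneg.mpr (Real.sqrt_nonneg _)
        have : (0:ℝ) ≤ π / (16 * Real.sqrt N) :=
          div_nonneg hpi.le (by positivity)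
        positivity
      · filter_upwards [Filter.eventually_ge_atTop 3] with N hN3
        have hN1 : (1:ℝ) ≤ (N:ℝ) := by exact_mod_cast (by omega : 1 ≤ N)
        have hN0 : (0:ℝ) < (N:ℝ) := by linarith
        have hlog : 1 ≤ Real.log N := by
          rw [Real.le_log_iff_exp_le hN0]
          calc Real.exp 1 ≤ 2.7182818286 := Real.exp_one_lt_d9.le
            _ ≤ 3 := by norm_num
            _ ≤ (N:ℝ) := by exact_mod_cast hN3
        have hlog0 : 0 < Real.log N := by linarith
        have hsN : 0 < Real.sqrt N := Real.sqrt_pos.mpr hN0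
        have hsL : 0 < Real.sqrt (Real.log N) := Real.sqrt_pos.mpr hlog0
        have hsNL : 0 < Real.sqrt ((N:ℝ) * Real.log N) := Real.sqrt_pos.mpr (by positivity)
        have hkey : Real.sqrt ((N:ℝ) * Real.log N) * Real.sqrt N
            = (N:ℝ) * Real.sqrt (Real.log N) := by
          rw [Real.sqrt_mul (le_of_lt hN0)]
          rw [show Real.sqrt (N:ℝ) * Real.sqrt (Real.log N) * Real.sqrt (N:ℝ)
            = Real.sqrt (N:ℝ) * Real.sqrt (N:ℝ) * Real.sqrt (Real.log N) from by ring]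
          rw [Real.mul_self_sqrt (le_of_lt hN0)]
        have hm : (M N : ℝ) ≤ (N:ℝ) * 𝒯 := Nat.floor_le (by positivity)
        have hpi := Real.pi_pos
        have hrw : cscale N * ((M N : ℝ) * (2 * (π / (16 * Real.sqrt N))))
            = (π / 8) * ((M N : ℝ) / (Real.sqrt ((N:ℝ) * Real.log N) * Real.sqrt N)) := by
          unfold cscale
          field_simp
          ring
        rw [hrw, hkey]
        have hfrac : (M N : ℝ) / ((N:ℝ) * Real.sqrt (Real.log N))
            ≤ 𝒯 * (Real.sqrt (Real.log N))⁻¹ := by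
          rw [div_le_iff₀ (by positivity)]
          calc (M N : ℝ) ≤ (N:ℝ) * 𝒯 := hm
            _ = 𝒯 * (Real.sqrt (Real.log N))⁻¹ * ((N:ℝ) * Real.sqrt (Real.log N)) := by
                field_simp
        calc δ⁻¹ * ((π / 8) * ((M N : ℝ) / ((N:ℝ) * Real.sqrt (Real.log N))))
            ≤ δ⁻¹ * ((π / 8) * (𝒯 * (Real.sqrt (Real.log N))⁻¹)) := by
              apply mul_le_mul_of_nonneg_left ?_ (by positivity)
              exact mul_le_mul_of_nonneg_left hfrac (by positivity)
          _ = (δ⁻¹ * π * 𝒯 / 8) * (Real.sqrt (Real.log N))⁻¹ := by ring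
    have := ENNReal.tendsto_ofReal hr
    simpa using this
  have hlim : Tendsto (fun N : ℕ =>
      2 * ENNReal.ofReal (Real.exp (-(32 * δ' ^ 2 * Real.sqrt N)))
        + ENNReal.ofReal (δ⁻¹ * (cscale N * ((M N : ℝ) * (2 * (π / (16 * Real.sqrt N)))))))
      atTop (nhds 0) := by
    simpa using hlimA.add hlimB
  have hhalf : (0:ℝ≥0∞) < ε / 2 := ENNReal.div_pos hε.ne' (by norm_num)
  have hev := hlim.eventually_lt_const hhalf
  filter_upwards [hev, Filter.eventually_ge_atTop 1] with N h1 h2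
  calc S.Pr {ω | ∃ t ∈ Set.Icc (0:ℝ) 𝒯, δ < |∑ α, lam α * ZgtVal S N α t ω|}
      ≤ ENNReal.ofReal (2 * ε')
        + (2 * ENNReal.ofReal (Real.exp (-(32 * δ' ^ 2 * Real.sqrt N)))
          + ENNReal.ofReal (δ⁻¹ * (cscale N *
            ((M N : ℝ) * (2 * (π / (16 * Real.sqrt N))))))) := hbound N h2
    _ ≤ ε / 2 + ε / 2 := add_le_add hε' h1.le
    _ = ε := ENNReal.add_halves ε

end
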